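/- The function F(y) = -((1 + y²)/y)·(2·arctan(y) - arctan(1/y)) is strictly decreasing on (0, ∞), has a unique zero y* ∈ (0,1), and satisfies F(y) → +∞ as y → 0⁺ and F(y) → -∞ as y → +∞. In particular, for every λ ∈ ℝ there exists a unique y > 0 with F(y) = λ, and F(1) = -π/2. -/

import Mathlib

open Real Set Filter

private noncomputable def Gfun : ℝ → ℝ := fun y => ((1 + y ^ 2) / y) * (π / 2 - 3 * arctan y)

private lemma F_eq_G {y : ℝ} (hy : 0 < y) :
    -((1 + y ^ 2) / y) * (2 * arctan y - arctan (1 / y)) = Gfun y := by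
  rw [Gfun, one_div, arctan_inv_of_pos hy]
  ring

private lemma G_hasDeriv {y : ℝ} (hy : 0 < y) :
    HasDerivAt Gfun ((y ^ 2 - 1) / y ^ 2 * (π / 2 - 3 * arctan y) - 3 / y) y := by
  have hu : HasDerivAt (fun y : ℝ => (1 + y ^ 2) / y) ((y ^ 2 - 1) / y ^ 2) y := by
    have h1 : HasDerivAt (fun y : ℝ => 1 + y ^ 2) (2 * y) y := by
      simpa using ((hasDerivAt_pow 2 y).const_add 1)
    have := h1.div (hasDerivAt_id y) hy.ne'
    refine this.congr_deriv ?_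
    simp only [id]
    field_simp
    ring
  have hv : HasDerivAt (fun y : ℝ => π / 2 - 3 * arctan y) (-(3 * (1 / (1 + y ^ 2)))) y := by
    exact (((hasDerivAt_arctan y).const_mul 3)).const_sub (π / 2)
  have := hu.mul hv
  refine this.congr_deriv ?_
  have h1 : (1 : ℝ) + y ^ 2 ≠ 0 := by positivity
  field_simp
  ring

private lemma G_deriv_neg {y : ℝ} (hy : 0 < y) :
    (y ^ 2 - 1) / y ^ 2 * (π / 2 - 3 * arctan y) - 3 / y < 0 := by
  have hy3 : 0 < 3 / y := by positivity
  rcases le_or_gt y 1 with h1 | h1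
  · have hA : (y ^ 2 - 1) / y ^ 2 ≤ 0 := by
      apply div_nonpos_of_nonpos_of_nonneg
      · nlinarith
      · positivity
    have ha4 : arctan y ≤ π / 4 := by
      rw [← arctan_one]; exact arctan_strictMono.monotone h1
    rcases le_or_gt (3 * arctan y) (π / 2) with hB | hB
    · nlinarith [mul_nonpos_of_nonpos_of_nonneg hA (by linarith : (0:ℝ) ≤ π / 2 - 3 * arctan y)]
    · -- arctan y > π/6, so y > tan (π/6) = √3/3, hence y² > 1/3
      have hpi6 : π / 6 < arctan y := by linarith
      have htan : Real.tan (π / 6) < Real.tan (arctan y) := by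
        apply tan_lt_tan_of_lt_of_lt_pi_div_two _ (arctan_lt_pi_div_two y) hpi6
        have := pi_pos; linarith
      rw [tan_arctan] at htan
      have htan6 : Real.tan (π / 6) = Real.sqrt 3 / 3 := by
        rw [tan_eq_sin_div_cos, sin_pi_div_six, cos_pi_div_six]
        rw [div_eq_div_iff (by positivity) (by norm_num)]
        nlinarith [Real.sq_sqrt (by norm_num : (3:ℝ) ≥ 0), Real.sqrt_nonneg 3]
      rw [htan6] at htan
      have hy2 : 1 / 3 < y ^ 2 := by
        nlinarith [Real.sq_sqrt (by norm_num : (3:ℝ) ≥ 0), Real.sqrt_nonneg 3]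
      -- t := (y²-1)/y² ∈ (-2, 0], B := π/2 - 3 arctan y ∈ [-π/4, 0)
      have ht2 : -2 < (y ^ 2 - 1) / y ^ 2 := by
        rw [lt_div_iff₀ (by positivity : (0:ℝ) < y ^ 2)]
        nlinarith
      have hBlb : -(π / 4) ≤ π / 2 - 3 * arctan y := by linarith
      have hBub : π / 2 - 3 * arctan y < 0 := by linarith
      have h3le : 3 ≤ 3 / y := by
        rw [le_div_iff₀ hy]; nlinarith
      have hpi : π < 3.15 := pi_lt_d2
      set t := (y ^ 2 - 1) / y ^ 2 with ht
      set B := π / 2 - 3 * arctan y with hB'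
      have key : t * B < -2 * B := by
        have := mul_pos (by linarith : (0:ℝ) < t + 2) (by linarith : (0:ℝ) < -B)
        nlinarith
      nlinarith
  · have hA : 0 ≤ (y ^ 2 - 1) / y ^ 2 := by
      apply div_nonneg (by nlinarith) (by positivity)
    have ha4 : π / 4 < arctan y := by
      rw [← arctan_one]; exact arctan_strictMono h1
    have := pi_pos
    nlinarith [mul_nonpos_of_nonneg_of_nonpos hA (by linarith : π / 2 - 3 * arctan y ≤ 0)]

private lemma G_strictAntiOn : StrictAntiOn Gfun (Ioi 0) := by
  apply strictAntiOn_of_deriv_neg (convex_Ioi 0)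
  · exact fun x hx => (G_hasDeriv hx).continuousAt.continuousWithinAt
  · intro x hx
    rw [interior_Ioi] at hx
    rw [(G_hasDeriv hx).deriv]
    exact G_deriv_neg hx

private lemma F_strictAntiOn :
    StrictAntiOn (fun y : ℝ => -((1 + y ^ 2) / y) * (2 * arctan y - arctan (1 / y))) (Ioi 0) := by
  intro x hx y hy hxy
  simp only [F_eq_G hx, F_eq_G hy]
  exact G_strictAntiOn hx hy hxy

private lemma F_continuousOn :
    ContinuousOn (fun y : ℝ => -((1 + y ^ 2) / y) * (2 * arctan y - arctan (1 / y))) (Ioi 0) := by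
  apply ContinuousOn.congr (f := Gfun)
  · exact fun x hx => (G_hasDeriv hx).continuousAt.continuousWithinAt
  · exact fun x hx => F_eq_G hx

private lemma sqrt3_lt : Real.sqrt 3 < 3 := by
  nlinarith [Real.sq_sqrt (by norm_num : (3:ℝ) ≥ 0), Real.sqrt_nonneg 3]

private lemma arctan_sqrt3_div3 : arctan (Real.sqrt 3 / 3) = π / 6 := by
  have htan6 : Real.tan (π / 6) = Real.sqrt 3 / 3 := by
    rw [tan_eq_sin_div_cos, sin_pi_div_six, cos_pi_div_six]
    rw [div_eq_div_iff (by positivity) (by norm_num)]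
    nlinarith [Real.sq_sqrt (by norm_num : (3:ℝ) ≥ 0), Real.sqrt_nonneg 3]
  rw [← htan6]
  exact arctan_tan (by nlinarith [pi_pos]) (by nlinarith [pi_pos])

theorem stmt_6 :
    StrictAntiOn (fun y : ℝ => -((1 + y ^ 2) / y) * (2 * arctan y - arctan (1 / y))) (Ioi 0) ∧
    (∃! y : ℝ, y ∈ Ioo (0 : ℝ) 1 ∧
      -((1 + y ^ 2) / y) * (2 * arctan y - arctan (1 / y)) = 0) ∧
    Tendsto (fun y : ℝ => -((1 + y ^ 2) / y) * (2 * arctan y - arctan (1 / y)))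
      (nhdsWithin 0 (Ioi 0)) atTop ∧
    Tendsto (fun y : ℝ => -((1 + y ^ 2) / y) * (2 * arctan y - arctan (1 / y))) atTop atBot ∧
    (∀ lam : ℝ, ∃! y : ℝ, 0 < y ∧
      -((1 + y ^ 2) / y) * (2 * arctan y - arctan (1 / y)) = lam) ∧
    -((1 + (1 : ℝ) ^ 2) / 1) * (2 * arctan 1 - arctan (1 / 1)) = -(π / 2) := by
  have sqrt3_pos : 0 < Real.sqrt 3 := Real.sqrt_pos.mpr (by norm_num)
  -- limits
  have htop : Tendsto (fun y : ℝ => -((1 + y ^ 2) / y) * (2 * arctan y - arctan (1 / y))) (nhdsWithin 0 (Ioi 0)) atTop := by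
    have hG : Tendsto Gfun (nhdsWithin (0:ℝ) (Ioi 0)) atTop := by
      have h1 : Tendsto (fun y : ℝ => (1 + y ^ 2) / y) (nhdsWithin (0:ℝ) (Ioi 0)) atTop := by
        have hnum : Tendsto (fun y : ℝ => 1 + y ^ 2) (nhdsWithin (0:ℝ) (Ioi 0)) (nhds 1) := by
          have h0 : Tendsto (fun y : ℝ => 1 + y ^ 2) (nhds (0:ℝ)) (nhds (1 + (0:ℝ) ^ 2)) :=
            Continuous.tendsto (by fun_prop) 0
          simpa using h0.mono_left nhdsWithin_le_nhds
        have := Tendsto.pos_mul_atTop one_pos hnum tendsto_inv_nhdsGT_zero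
        simpa [div_eq_mul_inv] using this
      have h2 : Tendsto (fun y : ℝ => π / 2 - 3 * arctan y) (nhdsWithin (0:ℝ) (Ioi 0)) (nhds (π / 2)) := by
        have h0 : Tendsto (fun y : ℝ => π / 2 - 3 * arctan y) (nhds (0:ℝ))
            (nhds (π / 2 - 3 * arctan 0)) := Continuous.tendsto (continuous_const.sub (continuous_const.mul Real.continuous_arctan)) 0
        simpa using h0.mono_left nhdsWithin_le_nhds
      exact Tendsto.atTop_mul_pos (by positivity) h1 h2
    apply hG.congr'
    filter_upwards [self_mem_nhdsWithin] with y hy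
    exact (F_eq_G hy).symm
  have hbot : Tendsto (fun y : ℝ => -((1 + y ^ 2) / y) * (2 * arctan y - arctan (1 / y))) atTop atBot := by
    have hG : Tendsto Gfun atTop atBot := by
      have h1 : Tendsto (fun y : ℝ => (1 + y ^ 2) / y) atTop atTop := by
        apply tendsto_atTop_mono' atTop (f₁ := fun y : ℝ => y)
        · filter_upwards [eventually_gt_atTop (0:ℝ)] with y hy
          rw [le_div_iff₀ hy]; nlinarith
        · exact tendsto_id
      have h2 : Tendsto (fun y : ℝ => π / 2 - 3 * arctan y) atTop (nhds (π / 2 - 3 * (π / 2))) := by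
        exact tendsto_const_nhds.sub
          (tendsto_const_nhds.mul (tendsto_arctan_atTop.mono_right nhdsWithin_le_nhds))
      exact Tendsto.atTop_mul_neg (by nlinarith [pi_pos]) h1 h2
    apply hG.congr'
    filter_upwards [eventually_gt_atTop (0:ℝ)] with y hy
    exact (F_eq_G hy).symm
  -- unique zero
  have hzero : ∃! y : ℝ, y ∈ Ioo (0 : ℝ) 1 ∧ -((1 + y ^ 2) / y) * (2 * arctan y - arctan (1 / y)) = 0 := by
    refine ⟨Real.sqrt 3 / 3, ⟨⟨by positivity, by nlinarith [sqrt3_lt]⟩, ?_⟩, ?_⟩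
    · rw [F_eq_G (by positivity : (0:ℝ) < Real.sqrt 3 / 3)]
      simp only [Gfun, arctan_sqrt3_div3]
      ring
    · rintro y ⟨⟨hy0, hy1⟩, hFy⟩
      refine F_strictAntiOn.injOn (mem_Ioi.mpr hy0) (mem_Ioi.mpr (by positivity)) ?_
      show -((1 + y ^ 2) / y) * (2 * arctan y - arctan (1 / y)) =
        -((1 + (Real.sqrt 3 / 3) ^ 2) / (Real.sqrt 3 / 3)) *
          (2 * arctan (Real.sqrt 3 / 3) - arctan (1 / (Real.sqrt 3 / 3)))
      rw [hFy, F_eq_G (by positivity : (0:ℝ) < Real.sqrt 3 / 3)]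
      simp only [Gfun, arctan_sqrt3_div3]
      ring
  -- surjectivity
  have hsurj : ∀ lam : ℝ, ∃! y : ℝ, 0 < y ∧ -((1 + y ^ 2) / y) * (2 * arctan y - arctan (1 / y)) = lam := by
    intro lam
    obtain ⟨a, ⟨hla, ha0⟩⟩ := ((htop.eventually_ge_atTop lam).and self_mem_nhdsWithin).exists
    obtain ⟨b, ⟨hlb, hab⟩⟩ :=
      ((hbot.eventually_le_atBot lam).and (eventually_ge_atTop a)).exists
    have hicc : Icc a b ⊆ Ioi 0 := fun x hx => lt_of_lt_of_le ha0 hx.1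
    have := intermediate_value_Icc' hab (F_continuousOn.mono hicc)
    obtain ⟨y, hy_mem, hy_eq⟩ := this ⟨hlb, hla⟩
    refine ⟨y, ⟨hicc hy_mem, hy_eq⟩, ?_⟩
    rintro z ⟨hz0, hzeq⟩
    exact F_strictAntiOn.injOn (mem_Ioi.mpr hz0) (hicc hy_mem) (hzeq.trans hy_eq.symm)
  refine ⟨F_strictAntiOn, hzero, htop, hbot, hsurj, ?_⟩
  rw [show (1:ℝ)/1 = 1 by norm_num, arctan_one]
  ring
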